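/- If T is a bounded operator on K_Θ such that S_Θ*ⁿ T S_Θⁿ converges in operator norm, then T = T₁ + K where K is compact on K_Θ and T₁ satisfies S_Θ* T₁ S_Θ = T₁. -/

import Mathlib

noncomputable section

open Complex Filter Topology ContinuousLinearMap
open scoped ENNReal

/-- The Hardy space `H²`, modeled as the space of square-summable Taylor coefficient
sequences. -/
abbrev H2 : Type := lp (fun _ : ℕ => ℂ) 2

/-- The shifted coefficient sequence, i.e. the Taylor coefficients of `z • f`. -/
def shiftFun (f : ∀ _ : ℕ, ℂ) : ∀ _ : ℕ, ℂ
  | 0 => 0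
  | n + 1 => f n

lemma shiftFun_memℓp (f : H2) : Memℓp (shiftFun f) 2 := by
  apply memℓp_gen
  have hf : Summable fun n => ‖(f : ∀ _ : ℕ, ℂ) n‖ ^ (2 : ℝ≥0∞).toReal :=
    Memℓp.summable (by norm_num) (lp.memℓp f)
  refine (summable_nat_add_iff 1).1 ?_
  simpa [shiftFun] using hf

lemma shiftFun_tsum (f : H2) :
    (∑' n, ‖shiftFun f n‖ ^ (2 : ℝ≥0∞).toReal)
      = ∑' n, ‖(f : ∀ _ : ℕ, ℂ) n‖ ^ (2 : ℝ≥0∞).toReal := by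
  rw [Summable.tsum_eq_zero_add ((shiftFun_memℓp f).summable (by norm_num))]
  simp [shiftFun]

/-- The unilateral shift `S f = z • f` on `H²`. -/
def shift : H2 →L[ℂ] H2 := by
  refine LinearMap.mkContinuous
    { toFun := fun f => ⟨shiftFun f, shiftFun_memℓp f⟩
      map_add' := ?_
      map_smul' := ?_ } 1 ?_
  · intro f g; ext n; cases n <;> simp [shiftFun] <;> first | exact (add_zero 0).symm | rfl
  · intro c f; ext n; cases n <;> simp [shiftFun]
  · intro f
    rw [one_mul]
    apply le_of_eq
    rw [lp.norm_eq_tsum_rpow (by norm_num) , lp.norm_eq_tsum_rpow (by norm_num) f]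
    congr 1
    exact shiftFun_tsum f

/-- An inner function `Θ`, encoded by the multiplication operator `f ↦ Θ f` on `H²`:
an operator commutes with the shift iff it is multiplication by a bounded analytic
function `Θ`, and this multiplication is isometric on `H²` iff `Θ` is inner. -/
structure InnerFunction where
  /-- The multiplication operator `f ↦ Θ f` on `H²`. -/
  mul : H2 →L[ℂ] H2
  /-- Multiplication by `Θ` commutes with the shift (i.e. `Θ ∈ H^∞`). -/
  comm : mul ∘L shift = shift ∘L mul
  /-- `Θ` has unimodular boundary values a.e., i.e. multiplication by `Θ` is isometric. -/
  isom : ∀ f : H2, ‖mul f‖ = ‖f‖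

/-- The subspace `Θ H²` of `H²`. -/
def thetaH2 (Θ : InnerFunction) : Submodule ℂ H2 := LinearMap.range (Θ.mul : H2 →ₗ[ℂ] H2)

/-- The model space `K_Θ = H² ⊖ Θ H²`. -/
def Ksp (Θ : InnerFunction) : Submodule ℂ H2 := (thetaH2 Θ)ᗮ

instance (Θ : InnerFunction) : CompleteSpace (Ksp Θ) :=
  (Submodule.isClosed_orthogonal _).completeSpace_coe

/-- The orthogonal projection `P_Θ` of `H²` onto the model space `K_Θ`. -/
def projK (Θ : InnerFunction) : H2 →L[ℂ] Ksp Θ := Submodule.orthogonalProjectionOnto (Ksp Θ)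

/-- The compressed shift `S_Θ = P_Θ S |_{K_Θ}` on the model space. -/
def Sc (Θ : InnerFunction) : Ksp Θ →L[ℂ] Ksp Θ :=
  projK Θ ∘L (shift ∘L (Ksp Θ).subtypeL)

/-- The constant function `1 ∈ H²`. -/
def one' : H2 := lp.single 2 0 1

/-- Evaluation of (the analytic extension of) `f ∈ H²` at a point `λ` of the disk:
`f(λ) = ∑ aₙ λⁿ`. -/
def evalAt (f : H2) (l : ℂ) : ℂ := ∑' n : ℕ, (f : ∀ _ : ℕ, ℂ) n * l ^ n

/-- The value `Θ(λ)` of the inner function at a point of the disk. -/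
def IFval (Θ : InnerFunction) (l : ℂ) : ℂ := evalAt (Θ.mul one') l

/-- The Szegő (Cauchy) kernel `c_λ(z) = 1/(1 - conj(λ) z)`, with Taylor coefficients
`conj(λ)ⁿ`, as an element of `H²`. -/
def szego (l : ℂ) : H2 := ∑' n : ℕ, (starRingEnd ℂ l) ^ n • lp.single 2 n 1

/-- The reproducing kernel `k_λ = P_Θ c_λ` of `K_Θ`,
`k_λ(z) = (1 - conj(Θ(λ)) Θ(z))/(1 - conj(λ) z)`. -/
def kern (Θ : InnerFunction) (l : ℂ) : Ksp Θ := projK Θ (szego l)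

/-- The reproducing kernel of `K_Θ` at `0`, `k₀(z) = 1 - conj(Θ(0)) Θ(z)`. -/
def kern0 (Θ : InnerFunction) : Ksp Θ := projK Θ one'

/-- The conjugate kernel `k̃_λ(z) = (Θ(z) - Θ(λ))/(z - λ)`, an element of `K_Θ`.
In terms of the backward shift, `k̃_λ = ∑_j λ^j S*^(j+1) Θ`, which lies in `K_Θ`
(so applying `P_Θ` does not change it). -/
def ckern (Θ : InnerFunction) (l : ℂ) : Ksp Θ :=
  projK Θ (∑' j : ℕ, l ^ j • ((ContinuousLinearMap.adjoint shift) ^ (j + 1)) (Θ.mul one'))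

/-- The rank-one operator `(u ⊗ v) f = ⟨f, v⟩ u` (inner product linear in `f`). -/
def rankOne {E : Type*} [NormedAddCommGroup E] [InnerProductSpace ℂ E]
    (u v : E) : E →L[ℂ] E := (innerSL ℂ v).smulRight u


section Aux

open ContinuousLinearMap

local notation "⟪" x ", " y "⟫" => @inner ℂ _ _ x y

instance KspNormedSpace (Θ : InnerFunction) : NormedSpace ℂ (Ksp Θ) :=
  Submodule.normedSpace _

lemma shift_coe (f : H2) : (shift f : ∀ _ : ℕ, ℂ) = shiftFun f := rfl

lemma shift_single (n : ℕ) : shift (lp.single 2 n 1) = lp.single 2 (n + 1) 1 := by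
  ext m
  rw [shift_coe]
  cases m with
  | zero => simp [shiftFun, lp.single_apply]
  | succ m =>
      show shiftFun (lp.single 2 n 1) (m + 1) = _
      simp only [shiftFun, lp.single_apply]
      by_cases h : m = n
      · subst h; simp
      · rw [Pi.single_eq_of_ne (by omega), Pi.single_eq_of_ne (by omega)]

lemma adjoint_shift_apply (f : H2) (n : ℕ) :
    (ContinuousLinearMap.adjoint shift f : ∀ _ : ℕ, ℂ) n = (f : ∀ _ : ℕ, ℂ) (n + 1) := by
  have h1 : ⟪lp.single 2 n (1 : ℂ), ContinuousLinearMap.adjoint shift f⟫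
      = (ContinuousLinearMap.adjoint shift f : ∀ _ : ℕ, ℂ) n := by
    rw [lp.inner_single_left]; simp [RCLike.inner_apply]
  rw [← h1, adjoint_inner_right, shift_single, lp.inner_single_left]
  simp [RCLike.inner_apply]

lemma Ksp_invariant (Θ : InnerFunction) {f : H2} (hf : f ∈ Ksp Θ) :
    ContinuousLinearMap.adjoint shift f ∈ Ksp Θ := by
  rw [Ksp, Submodule.mem_orthogonal]
  rintro u hu
  obtain ⟨g, rfl⟩ : ∃ g, Θ.mul g = u := hu
  rw [adjoint_inner_right]
  have hcomm : shift (Θ.mul g) = Θ.mul (shift g) := (DFunLike.congr_fun Θ.comm g).symm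
  rw [hcomm]
  exact (Submodule.mem_orthogonal _ _).1 hf _ ⟨shift g, rfl⟩

lemma adjoint_Sc_apply (Θ : InnerFunction) (f : Ksp Θ) :
    ContinuousLinearMap.adjoint (Sc Θ) f = projK Θ (ContinuousLinearMap.adjoint shift (f : H2)) := by
  rw [Sc, adjoint_comp, adjoint_comp, Submodule.adjoint_subtypeL, projK,
    Submodule.adjoint_orthogonalProjectionOnto]
  rfl

lemma Sc_adjoint_Sc_apply (Θ : InnerFunction) (f : Ksp Θ) :
    Sc Θ (ContinuousLinearMap.adjoint (Sc Θ) f)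
      = f - ((f : ∀ _ : ℕ, ℂ) 0) • kern0 Θ := by
  have hg : ContinuousLinearMap.adjoint shift (f : H2) ∈ Ksp Θ := Ksp_invariant Θ f.2
  have h1 : ContinuousLinearMap.adjoint (Sc Θ) f
      = projK Θ (ContinuousLinearMap.adjoint shift (f : H2)) := adjoint_Sc_apply Θ f
  have h2 : ((projK Θ (ContinuousLinearMap.adjoint shift (f : H2))) : H2)
      = ContinuousLinearMap.adjoint shift (f : H2) := Submodule.starProjection_eq_self_iff.2 hg
  have h3 : Sc Θ (ContinuousLinearMap.adjoint (Sc Θ) f)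
      = projK Θ (shift (ContinuousLinearMap.adjoint shift (f : H2))) := by
    rw [h1]
    exact congrArg (fun x => projK Θ (shift x)) h2
  rw [h3]
  have h4 : shift (ContinuousLinearMap.adjoint shift (f : H2))
      = (f : H2) - ((f : ∀ _ : ℕ, ℂ) 0) • one' := by
    ext n
    rw [shift_coe]
    cases n with
    | zero =>
        erw [lp.coeFn_sub, Pi.sub_apply, lp.coeFn_smul, Pi.smul_apply]
        simp [shiftFun, one', lp.coeFn_sub, lp.coeFn_smul, lp.single_apply, Pi.sub_apply, Pi.smul_apply]
    | succ n =>
        show shiftFun _ (n + 1) = _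
        erw [lp.coeFn_sub, Pi.sub_apply, lp.coeFn_smul, Pi.smul_apply]
        simp [shiftFun, adjoint_shift_apply, one', lp.coeFn_sub, lp.coeFn_smul,
          lp.single_apply, Nat.succ_ne_zero, Pi.sub_apply, Pi.smul_apply]
  rw [h4, map_sub, map_smul]
  rw [show projK Θ (f : H2) = f from Submodule.orthogonalProjectionOnto_mem_subspace_eq_self f]
  rfl

lemma inner_kern0 (Θ : InnerFunction) (f : Ksp Θ) :
    ⟪kern0 Θ, f⟫ = (f : ∀ _ : ℕ, ℂ) 0 := by
  have h0 : ⟪kern0 Θ, f⟫ = ⟪(kern0 Θ : H2), (f : H2)⟫ := rfl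
  rw [h0]
  have : ((kern0 Θ : H2)) = ((Submodule.orthogonalProjectionOnto (Ksp Θ) one' : Ksp Θ) : H2) := rfl
  rw [this, ← Submodule.coe_inner, Submodule.inner_orthogonalProjectionOnto_eq_of_mem_right]
  rw [show (one' : H2) = lp.single 2 0 (1 : ℂ) from rfl, lp.inner_single_left]
  simp [RCLike.inner_apply]

lemma compact_rankOne {E : Type*} [NormedAddCommGroup E] [InnerProductSpace ℂ E]
    (u v : E) : IsCompactOperator (rankOne u v) := by
  refine ⟨(fun c : ℂ => c • u) '' Metric.closedBall 0 ‖v‖,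
    (isCompact_closedBall 0 ‖v‖).image (by continuity), ?_⟩
  refine Filter.mem_of_superset (Metric.closedBall_mem_nhds (0 : E) one_pos) ?_
  intro x hx
  refine ⟨⟪v, x⟫, ?_, rfl⟩
  rw [Metric.mem_closedBall, dist_zero_right]
  rw [Metric.mem_closedBall, dist_zero_right] at hx
  calc ‖⟪v, x⟫‖ ≤ ‖v‖ * ‖x‖ := norm_inner_le_norm v x
    _ ≤ ‖v‖ * 1 := by
        exact mul_le_mul_of_nonneg_left hx (norm_nonneg v)
    _ = ‖v‖ := mul_one _

lemma defect_eq (Θ : InnerFunction) :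
    (1 : Ksp Θ →L[ℂ] Ksp Θ) - Sc Θ * ContinuousLinearMap.adjoint (Sc Θ)
      = rankOne (kern0 Θ) (kern0 Θ) := by
  refine ContinuousLinearMap.ext fun f => ?_
  show f - Sc Θ (ContinuousLinearMap.adjoint (Sc Θ) f) = ⟪kern0 Θ, f⟫ • kern0 Θ
  rw [Sc_adjoint_Sc_apply, inner_kern0, sub_sub_cancel]

set_option maxHeartbeats 1000000 in
lemma compact_defect_pow (Θ : InnerFunction) (n : ℕ) :
    IsCompactOperator
      ((1 : Ksp Θ →L[ℂ] Ksp Θ) - (Sc Θ) ^ n * (ContinuousLinearMap.adjoint (Sc Θ)) ^ n) := by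
  induction n with
  | zero => simpa using isCompactOperator_zero
  | succ n ih =>
      have halg : (1 : Ksp Θ →L[ℂ] Ksp Θ) - (Sc Θ) ^ (n + 1)
            * (ContinuousLinearMap.adjoint (Sc Θ)) ^ (n + 1)
          = ((1 : Ksp Θ →L[ℂ] Ksp Θ) - Sc Θ * ContinuousLinearMap.adjoint (Sc Θ))
            + Sc Θ * (((1 : Ksp Θ →L[ℂ] Ksp Θ)
              - (Sc Θ) ^ n * (ContinuousLinearMap.adjoint (Sc Θ)) ^ n)
                * ContinuousLinearMap.adjoint (Sc Θ)) := by
        rw [pow_succ' (Sc Θ), pow_succ (ContinuousLinearMap.adjoint (Sc Θ))]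
        simp only [sub_mul, mul_sub, one_mul, mul_one, mul_assoc]
        abel
      rw [halg, ContinuousLinearMap.coe_add']
      refine IsCompactOperator.add ?_ ?_
      · rw [defect_eq]; exact compact_rankOne _ _
      · exact ((ih.comp_clm (ContinuousLinearMap.adjoint (Sc Θ))).clm_comp (Sc Θ))

lemma Sc_apply' (Θ : InnerFunction) (f : Ksp Θ) :
    Sc Θ f = projK Θ (shift (f : H2)) := rfl

lemma norm_shift_apply (g : H2) : ‖shift g‖ = ‖g‖ := by
  rw [lp.norm_eq_tsum_rpow (by norm_num) (shift g), lp.norm_eq_tsum_rpow (by norm_num) g]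
  congr 1
  rw [show (⇑(shift g) : ∀ _ : ℕ, ℂ) = shiftFun g from rfl]
  exact shiftFun_tsum g

lemma Sc_adjoint_norm_le (Θ : InnerFunction) :
    ‖ContinuousLinearMap.adjoint (Sc Θ)‖ = ‖Sc Θ‖ :=
  ContinuousLinearMap.adjoint.norm_map (Sc Θ)

lemma Sc_norm_le (Θ : InnerFunction) : ‖Sc Θ‖ ≤ 1 := by
  refine ContinuousLinearMap.opNorm_le_bound _ zero_le_one fun f => ?_
  rw [one_mul, Sc_apply']
  refine le_trans ((projK Θ).le_opNorm _) ?_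
  have h1 : ‖projK Θ‖ ≤ 1 := by rw [projK]; exact Submodule.orthogonalProjectionOnto_norm_le _
  have h2 : ‖shift ((f : H2))‖ = ‖f‖ := norm_shift_apply _
  calc ‖projK Θ‖ * ‖shift (f : H2)‖ ≤ 1 * ‖shift (f : H2)‖ :=
        mul_le_mul_of_nonneg_right h1 (norm_nonneg _)
    _ = ‖f‖ := by rw [one_mul, h2]

end Aux

set_option maxHeartbeats 2000000 in
/-- If `S_Θ*ⁿ T S_Θⁿ` converges in operator norm then `T = T₁ + K` with `K` compact
and `S_Θ* T₁ S_Θ = T₁`. -/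
theorem uniformly_asymptotically_toeplitz_decomposition (Θ : InnerFunction)
    (T : Ksp Θ →L[ℂ] Ksp Θ)
    (h : ∃ A : Ksp Θ →L[ℂ] Ksp Θ, Filter.Tendsto
      (fun n : ℕ => ((ContinuousLinearMap.adjoint (Sc Θ)) ^ n) ∘L T ∘L ((Sc Θ) ^ n))
      Filter.atTop (nhds A)) :
    ∃ T₁ K : Ksp Θ →L[ℂ] Ksp Θ, IsCompactOperator K ∧
      ContinuousLinearMap.adjoint (Sc Θ) ∘L T₁ ∘L Sc Θ = T₁ ∧ T = T₁ + K := by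
  classical
  obtain ⟨A, hA⟩ := h
  set S : Ksp Θ →L[ℂ] Ksp Θ := Sc Θ with hS
  set S' : Ksp Θ →L[ℂ] Ksp Θ := ContinuousLinearMap.adjoint (Sc Θ) with hS'
  -- The Toeplitz property of the limit
  have hQsucc : ∀ n : ℕ, (S' ^ (n + 1)) ∘L T ∘L (S ^ (n + 1))
      = S' ∘L (((S' ^ n) ∘L T ∘L (S ^ n)) ∘L S) := by
    intro n
    rw [pow_succ' S', pow_succ S]
    simp only [← ContinuousLinearMap.mul_def]
    simp only [mul_assoc]
  have hΦcont : Continuous fun X : Ksp Θ →L[ℂ] Ksp Θ => S' ∘L (X ∘L S) :=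
    continuous_const.clm_comp (continuous_id.clm_comp continuous_const)
  have h1 : Filter.Tendsto (fun n : ℕ => S' ∘L (((S' ^ n) ∘L T ∘L (S ^ n)) ∘L S))
      Filter.atTop (nhds (S' ∘L (A ∘L S))) := (hΦcont.tendsto A).comp hA
  have h2 : Filter.Tendsto (fun n : ℕ => (S' ^ (n + 1)) ∘L T ∘L (S ^ (n + 1)))
      Filter.atTop (nhds A) := hA.comp (tendsto_add_atTop_nat 1)
  have hT1 : S' ∘L A ∘L S = A := by
    refine tendsto_nhds_unique ?_ h2
    simpa only [hQsucc] using h1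
  -- multiplicative form
  have hT1m : S' * (A * S) = A := hT1
  have hAinv : ∀ n : ℕ, S' ^ n * (A * S ^ n) = A := by
    intro n
    induction n with
    | zero => simp
    | succ n ih =>
        rw [pow_succ S', pow_succ' S]
        calc S' ^ n * S' * (A * (S * S ^ n))
            = S' ^ n * (S' * (A * S) * S ^ n) := by simp only [mul_assoc]
          _ = S' ^ n * (A * S ^ n) := by rw [hT1m]
          _ = A := ih
  -- norm bounds
  have hSnorm : ‖S‖ ≤ 1 := Sc_norm_le Θ
  have hS'norm : ‖S'‖ ≤ 1 := by
    rw [hS', Sc_adjoint_norm_le Θ]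
    exact hSnorm
  have hpow : ∀ (X : Ksp Θ →L[ℂ] Ksp Θ), ‖X‖ ≤ 1 → ∀ n : ℕ, ‖X ^ n‖ ≤ 1 := by
    intro X hX n
    induction n with
    | zero =>
        rw [pow_zero, ContinuousLinearMap.one_def]
        exact ContinuousLinearMap.norm_id_le
    | succ n ih =>
        rw [pow_succ]
        calc ‖X ^ n * X‖ = ‖(X ^ n).comp X‖ := rfl
          _ ≤ ‖X ^ n‖ * ‖X‖ := ContinuousLinearMap.opNorm_comp_le _ _
          _ ≤ 1 := by nlinarith [norm_nonneg (X ^ n), norm_nonneg X]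
  -- compactness of the remainder
  have hcomp : ∀ n : ℕ, IsCompactOperator
      ((T - A) - S ^ n * ((S' ^ n * (T * S ^ n) - A) * S' ^ n)) := by
    intro n
    have e3 : A * S' ^ n = S' ^ n * (A * (S ^ n * S' ^ n)) := by
      conv_lhs => rw [← hAinv n]
      simp only [mul_assoc]
    have hGeq : (T - A) - S ^ n * ((S' ^ n * (T * S ^ n) - A) * S' ^ n)
        = (1 - S ^ n * S' ^ n) * (T - A)
          + (S ^ n * S' ^ n * (T - A)) * (1 - S ^ n * S' ^ n) := by
      simp only [sub_mul, mul_sub, one_mul, mul_one, mul_assoc, e3]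
      abel
    rw [hGeq, ContinuousLinearMap.coe_add']
    refine IsCompactOperator.add ?_ ?_
    · exact (compact_defect_pow Θ n).comp_clm (T - A)
    · exact (compact_defect_pow Θ n).clm_comp (S ^ n * S' ^ n * (T - A))
  have hQA : Filter.Tendsto (fun n : ℕ => ‖S' ^ n * (T * S ^ n) - A‖)
      Filter.atTop (nhds 0) := by
    have := (tendsto_iff_norm_sub_tendsto_zero (E := Ksp Θ →L[ℂ] Ksp Θ)).1 hA
    exact this
  have hnorm : ∀ n : ℕ, ‖S ^ n * ((S' ^ n * (T * S ^ n) - A) * S' ^ n)‖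
      ≤ ‖S' ^ n * (T * S ^ n) - A‖ := by
    intro n
    calc ‖S ^ n * ((S' ^ n * (T * S ^ n) - A) * S' ^ n)‖
        ≤ ‖S ^ n‖ * ‖(S' ^ n * (T * S ^ n) - A) * S' ^ n‖ :=
          ContinuousLinearMap.opNorm_comp_le _ _
      _ ≤ ‖S ^ n‖ * (‖S' ^ n * (T * S ^ n) - A‖ * ‖S' ^ n‖) := by
          refine mul_le_mul_of_nonneg_left ?_ (norm_nonneg (S ^ n))
          exact ContinuousLinearMap.opNorm_comp_le _ _
      _ ≤ 1 * (‖S' ^ n * (T * S ^ n) - A‖ * ‖S' ^ n‖) := by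
          refine mul_le_mul_of_nonneg_right (hpow S hSnorm n) (by positivity)
      _ = ‖S' ^ n * (T * S ^ n) - A‖ * ‖S' ^ n‖ := one_mul _
      _ ≤ ‖S' ^ n * (T * S ^ n) - A‖ * 1 :=
          mul_le_mul_of_nonneg_left (hpow S' hS'norm n) (norm_nonneg (S' ^ n * (T * S ^ n) - A))
      _ = ‖S' ^ n * (T * S ^ n) - A‖ := mul_one _
  have hEn : Filter.Tendsto (fun n : ℕ => S ^ n * ((S' ^ n * (T * S ^ n) - A) * S' ^ n))
      Filter.atTop (nhds 0) := squeeze_zero_norm (E := Ksp Θ →L[ℂ] Ksp Θ) hnorm hQA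
  have h0 : Filter.Tendsto (fun _ : ℕ => T - A) Filter.atTop (nhds (T - A)) :=
    tendsto_const_nhds
  have hDlim : Filter.Tendsto
      (fun n : ℕ => (T - A) - S ^ n * ((S' ^ n * (T * S ^ n) - A) * S' ^ n))
      Filter.atTop (nhds (T - A)) := by
    have h' := h0.sub hEn
    rw [sub_zero] at h'
    exact h' 
  have hK : IsCompactOperator (T - A) :=
    isCompactOperator_of_tendsto hDlim (Filter.Eventually.of_forall hcomp)
  exact ⟨A, T - A, hK, hT1, by abel⟩
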